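/- For every positive integer n, the map d_{com,A}^{(n)} is order-reversing on partitions of a fixed integer N: if 𝔮 ≤ 𝔮′ in the dominance order, then d_{com,A}^{(n)}(𝔮) ≥ d_{com,A}^{(n)}(𝔮′). -/

import Mathlib

noncomputable section
open scoped Classical

namespace PaperStmt

/-- The parts of a partition (multiset of naturals) sorted in non-increasing order. -/
def sortDesc (p : Multiset ℕ) : List ℕ := (p.sort (· ≤ ·)).reverse

/-- Partial sum of the first `k` entries of a list. -/
def psum (l : List ℕ) (k : ℕ) : ℕ := (l.take k).sum

/-- Dominance order on partitions of the same integer. -/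
def Dom (p q : Multiset ℕ) : Prop :=
  p.sum = q.sum ∧ ∀ k, psum (sortDesc p) k ≤ psum (sortDesc q) k

/-- A partition: a multiset of positive parts. -/
def IsPartition (p : Multiset ℕ) : Prop := 0 ∉ p

/-- Type B: partition of an odd integer, every even part with even multiplicity. -/
def typeB (p : Multiset ℕ) : Prop := Odd p.sum ∧ ∀ v ≠ 0, Even v → Even (p.count v)

/-- Type C: partition of an even integer, every odd part with even multiplicity. -/
def typeC (p : Multiset ℕ) : Prop := Even p.sum ∧ ∀ v, Odd v → Even (p.count v)

/-- Type D: partition of an even integer, every even part with even multiplicity. -/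
def typeD (p : Multiset ℕ) : Prop := Even p.sum ∧ ∀ v ≠ 0, Even v → Even (p.count v)

/-- `q` is the `X`-collapse of `p`: the largest partition of type `X` below `p`
in dominance order. -/
def IsCollapse (X : Multiset ℕ → Prop) (p q : Multiset ℕ) : Prop :=
  X q ∧ Dom q p ∧ ∀ q', X q' → Dom q' p → Dom q' q

def collapse (X : Multiset ℕ → Prop) (p : Multiset ℕ) : Multiset ℕ :=
  if h : ∃ q, IsCollapse X p q then h.choose else 0

def collapseB : Multiset ℕ → Multiset ℕ := collapse typeB
def collapseC : Multiset ℕ → Multiset ℕ := collapse typeC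
def collapseD : Multiset ℕ → Multiset ℕ := collapse typeD

/-- The largest part. -/
def maxPart (p : Multiset ℕ) : ℕ := (sortDesc p).headI

/-- The smallest (positive) part. -/
def minPart (p : Multiset ℕ) : ℕ := (sortDesc p).getLastD 0

/-- `p⁺`: add 1 to the largest part. -/
def pplus (p : Multiset ℕ) : Multiset ℕ := (maxPart p + 1) ::ₘ p.erase (maxPart p)

/-- `p⁻`: subtract 1 from the smallest part, dropping a resulting zero. -/
def pminus (p : Multiset ℕ) : Multiset ℕ :=
  Multiset.filter (0 < ·) ((minPart p - 1) ::ₘ p.erase (minPart p))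

/-- `p⁺⁻`: add 1 to the largest part and subtract 1 from the smallest part. -/
def pmOp (p : Multiset ℕ) : Multiset ℕ := pminus (pplus p)

def zipSum : List ℕ → List ℕ → List ℕ
  | [], l => l
  | a :: as, [] => a :: as
  | a :: as, b :: bs => (a + b) :: zipSum as bs

/-- Coordinatewise sum of two partitions. -/
def addP (p q : Multiset ℕ) : Multiset ℕ := (zipSum (sortDesc p) (sortDesc q) : List ℕ)

/-- Double every part of a partition. -/
def doubleP (p : Multiset ℕ) : Multiset ℕ := p.map (fun v => 2 * v)

/-- The partition `𝔰(m; n) = (n^a, b)` where `m = n a + b`, `0 ≤ b < n`. -/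
def sMn (m n : ℕ) : Multiset ℕ :=
  Multiset.replicate (m / n) n + (if m % n = 0 then 0 else {m % n})

/-- The duality `d_{com,A}^{(n)}`: coordinatewise sum of the `𝔰(pᵢ; n)`. -/
def dcomA (n : ℕ) (p : Multiset ℕ) : Multiset ℕ :=
  (sortDesc p).foldr (fun q acc => addP (sMn q n) acc) 0

/-- Transpose (conjugate) of a partition: the `j`-th part is `#{i : pᵢ ≥ j}`. -/
def transposeP (p : Multiset ℕ) : Multiset ℕ :=
  Multiset.filter (0 < ·)
    ((Multiset.range (maxPart p)).map (fun j => (p.filter (fun v => j + 1 ≤ v)).card))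


/-! ### Auxiliary lemmas -/

lemma sortDesc_coe_multiset (p : Multiset ℕ) : (↑(sortDesc p) : Multiset ℕ) = p := by
  simp [sortDesc, Multiset.coe_reverse, Multiset.sort_eq]

lemma sortDesc_sorted (p : Multiset ℕ) : (sortDesc p).Pairwise (· ≥ ·) := by
  have h := Multiset.pairwise_sort p (· ≤ ·)
  rw [sortDesc, List.pairwise_reverse]
  exact h

lemma sortDesc_coe (l : List ℕ) (h : l.Pairwise (· ≥ ·)) : sortDesc (↑l) = l := by
  have h1 : (Multiset.sort (↑l : Multiset ℕ) (· ≤ ·)) = l.reverse := by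
    refine (fun hp h1 h2 => List.Perm.eq_of_pairwise' (r := fun a b : ℕ => a ≤ b) h1 h2 hp) ?_ ?_ ?_
    · apply Multiset.coe_eq_coe.mp
      rw [Multiset.sort_eq, Multiset.coe_reverse]
    · exact Multiset.pairwise_sort _ _
    · rw [List.pairwise_reverse]
      exact h
  simp [sortDesc, h1]

lemma psum_nil (k : ℕ) : psum [] k = 0 := by simp [psum]

lemma psum_zero (l : List ℕ) : psum l 0 = 0 := by simp [psum]

lemma psum_cons (a : ℕ) (l : List ℕ) (k : ℕ) : psum (a :: l) (k + 1) = a + psum l k := by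
  simp [psum]

lemma mem_zipSum : ∀ (a b : List ℕ) (x : ℕ), x ∈ zipSum a b →
    ∃ y z, (y = 0 ∨ y ∈ a) ∧ (z = 0 ∨ z ∈ b) ∧ x = y + z := by
  intro a
  induction a with
  | nil => intro b x hx; exact ⟨0, x, Or.inl rfl, Or.inr (by simpa [zipSum] using hx), by simp⟩
  | cons a as ih =>
    intro b x hx
    cases b with
    | nil => exact ⟨x, 0, Or.inr (by simpa [zipSum] using hx), Or.inl rfl, by simp⟩
    | cons b bs =>
      rw [zipSum, List.mem_cons] at hx
      rcases hx with rfl | hx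
      · exact ⟨a, b, Or.inr List.mem_cons_self, Or.inr List.mem_cons_self, rfl⟩
      · obtain ⟨y, z, hy, hz, hyz⟩ := ih bs x hx
        exact ⟨y, z, hy.imp id (List.mem_cons_of_mem _), hz.imp id (List.mem_cons_of_mem _), hyz⟩

lemma zipSum_sorted : ∀ (a b : List ℕ), a.Pairwise (· ≥ ·) → b.Pairwise (· ≥ ·) →
    (zipSum a b).Pairwise (· ≥ ·) := by
  intro a
  induction a with
  | nil => intro b _ hb; simpa [zipSum] using hb
  | cons a as ih =>
    intro b ha hb
    cases b with
    | nil => simpa [zipSum] using ha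
    | cons b bs =>
      rw [List.pairwise_cons] at ha hb
      rw [zipSum, List.pairwise_cons]
      refine ⟨?_, ih bs ha.2 hb.2⟩
      intro x hx
      obtain ⟨y, z, hy, hz, rfl⟩ := mem_zipSum as bs x hx
      have h1 : y ≤ a := by
        rcases hy with rfl | hy
        · exact Nat.zero_le _
        · exact ha.1 y hy
      have h2 : z ≤ b := by
        rcases hz with rfl | hz
        · exact Nat.zero_le _
        · exact hb.1 z hz
      exact Nat.add_le_add h1 h2

lemma psum_zipSum : ∀ (a b : List ℕ) (k : ℕ), psum (zipSum a b) k = psum a k + psum b k := by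
  intro a
  induction a with
  | nil => intro b k; simp [zipSum, psum_nil]
  | cons a as ih =>
    intro b k
    cases b with
    | nil => simp [zipSum, psum_nil]
    | cons b bs =>
      cases k with
      | zero => simp [psum_zero]
      | succ k =>
        rw [zipSum, psum_cons, psum_cons, psum_cons, ih bs k]
        omega

lemma zipSum_sum : ∀ (a b : List ℕ), (zipSum a b).sum = a.sum + b.sum := by
  intro a
  induction a with
  | nil => intro b; simp [zipSum]
  | cons a as ih =>
    intro b
    cases b with
    | nil => simp [zipSum]
    | cons b bs => rw [zipSum]; simp [ih bs]; omega

/-- The list form of `sMn`. -/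
def sList (x n : ℕ) : List ℕ :=
  List.replicate (x / n) n ++ if x % n = 0 then [] else [x % n]

lemma sList_coe (x n : ℕ) : (↑(sList x n) : Multiset ℕ) = sMn x n := by
  by_cases h : x % n = 0
  · simp [sList, sMn, h, Multiset.coe_replicate]
  · simp only [sList, sMn, if_neg h]
    rw [← Multiset.coe_singleton, ← Multiset.coe_replicate]
    exact (Multiset.coe_add _ _).symm

lemma sList_sorted (x n : ℕ) : (sList x n).Pairwise (· ≥ ·) := by
  rw [sList, List.pairwise_append]
  refine ⟨?_, ?_, ?_⟩
  · exact (List.pairwise_replicate).mpr (Or.inr (le_refl n))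
  · split <;> simp
  · intro a ha b hb
    rw [List.mem_replicate] at ha
    have hn : n ≠ 0 := fun h => ha.1 (by simp [h])
    have hb' : b = x % n := by
      revert hb; split <;> simp_all
    rw [ha.2, hb']
    exact le_of_lt (Nat.mod_lt x (Nat.pos_of_ne_zero hn))

lemma sList_sum (x n : ℕ) (hn : 0 < n) : (sList x n).sum = x := by
  have hx : x / n * n + x % n = x := by rw [mul_comm]; exact Nat.div_add_mod x n
  by_cases h : x % n = 0 <;>
    simp [sList, h, List.sum_replicate, smul_eq_mul] <;> omega

lemma psum_sList (x n k : ℕ) (hn : 0 < n) : psum (sList x n) k = min x (k * n) := by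
  have hx : x / n * n + x % n = x := by rw [mul_comm]; exact Nat.div_add_mod x n
  have hmod : x % n < n := Nat.mod_lt x hn
  rw [psum, sList, List.take_append, List.take_replicate,
    List.length_replicate, List.sum_append, List.sum_replicate, smul_eq_mul]
  rcases le_or_gt k (x / n) with hk | hk
  · have h1 : min k (x / n) = k := min_eq_left hk
    have h2 : k - x / n = 0 := Nat.sub_eq_zero_of_le hk
    have h3 : k * n ≤ x := by
      calc k * n ≤ (x / n) * n := Nat.mul_le_mul hk (le_refl n)
      _ ≤ x := by omega
    rw [h1, h2, min_eq_right h3]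
    simp
  · have h1 : min k (x / n) = x / n := min_eq_right (le_of_lt hk)
    have h4 : (x / n + 1) * n ≤ k * n := Nat.mul_le_mul hk (le_refl n)
    rw [add_mul, one_mul] at h4
    have h5 : x ≤ k * n := by omega
    rw [h1, min_eq_left h5]
    by_cases h : x % n = 0
    · simp [h]; omega
    · have h6 : 1 ≤ k - x / n := by omega
      have h7 : List.take (k - x / n) [x % n] = [x % n] := by
        cases he : k - x / n with
        | zero => omega
        | succ j => simp
      simp [h, h7]; omega

/-- The list-level fold computing `dcomA`. -/
def foldZ (n : ℕ) : List ℕ → List ℕ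
  | [] => []
  | q :: l => zipSum (sList q n) (foldZ n l)

lemma foldZ_sorted (n : ℕ) : ∀ l : List ℕ, (foldZ n l).Pairwise (· ≥ ·) := by
  intro l
  induction l with
  | nil => simp [foldZ]
  | cons q l ih => exact zipSum_sorted _ _ (sList_sorted q n) ih

lemma psum_foldZ (n : ℕ) (hn : 0 < n) :
    ∀ (l : List ℕ) (k : ℕ), psum (foldZ n l) k = (l.map (fun x => min x (k * n))).sum := by
  intro l
  induction l with
  | nil => intro k; simp [foldZ, psum_nil]
  | cons q l ih =>
    intro k
    rw [foldZ, psum_zipSum, psum_sList q n k hn, ih k]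
    simp

lemma foldZ_sum (n : ℕ) (hn : 0 < n) : ∀ l : List ℕ, (foldZ n l).sum = l.sum := by
  intro l
  induction l with
  | nil => simp [foldZ]
  | cons q l ih => rw [foldZ, zipSum_sum, sList_sum q n hn, ih]; simp

lemma dcomA_eq (n : ℕ) (p : Multiset ℕ) : dcomA n p = ↑(foldZ n (sortDesc p)) := by
  rw [dcomA]
  induction (sortDesc p) with
  | nil => simp [foldZ]
  | cons q l ih =>
    rw [List.foldr_cons, ih, foldZ, addP,
      sortDesc_coe _ (foldZ_sorted n l), ← sList_coe q n,
      sortDesc_coe _ (sList_sorted q n)]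

lemma dcomA_psum (n : ℕ) (hn : 0 < n) (p : Multiset ℕ) (k : ℕ) :
    psum (sortDesc (dcomA n p)) k = ((p.map (fun x => min x (k * n)))).sum := by
  rw [dcomA_eq, sortDesc_coe _ (foldZ_sorted n _), psum_foldZ n hn]
  conv_rhs => rw [← sortDesc_coe_multiset p]
  rw [Multiset.map_coe, Multiset.sum_coe]

lemma dcomA_sum (n : ℕ) (hn : 0 < n) (p : Multiset ℕ) : (dcomA n p).sum = p.sum := by
  rw [dcomA_eq, Multiset.sum_coe, foldZ_sum n hn]
  rw [← Multiset.sum_coe (sortDesc p), sortDesc_coe_multiset]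

lemma map_sub_psum_le (m : ℕ) : ∀ (l : List ℕ) (t : ℕ),
    psum l t - t * m ≤ (l.map (fun x => x - m)).sum := by
  intro l
  induction l with
  | nil => intro t; simp [psum_nil]
  | cons a l ih =>
    intro t
    cases t with
    | zero => simp [psum_zero]
    | succ t =>
      have h := ih t
      rw [psum_cons, List.map_cons, List.sum_cons, Nat.succ_mul]
      set c := t * m with hc
      omega

lemma map_min_add_map_sub (m : ℕ) : ∀ l : List ℕ,
    (l.map (fun x => min x m)).sum + (l.map (fun x => x - m)).sum = l.sum := by
  intro l
  induction l with
  | nil => simp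
  | cons a l ih =>
    simp only [List.map_cons, List.sum_cons]
    rcases le_total a m with h | h
    · rw [min_eq_left h]; omega
    · rw [min_eq_right h]; omega

lemma sorted_map_sub_eq (m : ℕ) : ∀ l : List ℕ, l.Pairwise (· ≥ ·) →
    (l.map (fun x => x - m)).sum
      = psum l (l.countP (fun x => decide (m < x))) - (l.countP (fun x => decide (m < x))) * m
    ∧ (l.countP (fun x => decide (m < x))) * m ≤ psum l (l.countP (fun x => decide (m < x))) := by
  intro l
  induction l with
  | nil => simp [psum_nil]
  | cons a l ih =>
    intro hs
    rw [List.pairwise_cons] at hs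
    obtain ⟨e1, e2⟩ := ih hs.2
    by_cases hm : m < a
    · rw [List.countP_cons_of_pos (by simpa using hm), psum_cons, List.map_cons,
        List.sum_cons, Nat.succ_mul]
      set t := l.countP (fun x => decide (m < x)) with ht
      set c := t * m with hc
      constructor <;> omega
    · have hz : l.countP (fun x => decide (m < x)) = 0 := by
        rw [List.countP_eq_zero]
        intro x hx
        simp only [decide_eq_true_eq]
        have := hs.1 x hx
        omega
      have hz' : (a :: l).countP (fun x => decide (m < x)) = 0 := by
        rw [List.countP_eq_zero]
        intro x hx
        rcases List.mem_cons.mp hx with rfl | hx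
        · simpa using hm
        · simp only [decide_eq_true_eq]
          have := hs.1 x hx
          omega
      have hsum0 : ((a :: l).map (fun x => x - m)).sum = 0 := by
        apply List.sum_eq_zero
        intro y hy
        rw [List.mem_map] at hy
        obtain ⟨x, hx, rfl⟩ := hy
        rcases List.mem_cons.mp hx with rfl | hx
        · omega
        · have := hs.1 x hx; omega
      rw [hz', hsum0, psum_zero]
      simp

lemma sum_min_mono (p q : Multiset ℕ) (m : ℕ) (hs : p.sum = q.sum)
    (hd : ∀ k, psum (sortDesc p) k ≤ psum (sortDesc q) k) :
    (q.map (fun x => min x m)).sum ≤ (p.map (fun x => min x m)).sum := by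
  have hpl : p = ↑(sortDesc p) := (sortDesc_coe_multiset p).symm
  have hql : q = ↑(sortDesc q) := (sortDesc_coe_multiset q).symm
  rw [hpl, hql, Multiset.map_coe, Multiset.map_coe, Multiset.sum_coe, Multiset.sum_coe]
  set l := sortDesc p with hl
  set l' := sortDesc q with hl'
  obtain ⟨e1, e2⟩ := sorted_map_sub_eq m l (sortDesc_sorted p)
  set t := l.countP (fun x => decide (m < x)) with htdef
  have hB := map_sub_psum_le m l' t
  have hA := map_min_add_map_sub m l
  have hA' := map_min_add_map_sub m l'
  have hsum : l.sum = l'.sum := by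
    rw [← Multiset.sum_coe l, ← Multiset.sum_coe l', ← hpl, ← hql]; exact hs
  have h1 : (l.map (fun x => x - m)).sum ≤ (l'.map (fun x => x - m)).sum := by
    rw [e1]
    exact le_trans (Nat.sub_le_sub_right (hd t) _) hB
  omega

/-- `d_{com,A}^{(n)}` is order-reversing for the dominance order. -/
theorem dcomA_orderReversing (n : ℕ) (hn : 0 < n) (p q : Multiset ℕ)
    (hp : IsPartition p) (hq : IsPartition q) (h : Dom p q) :
    Dom (dcomA n q) (dcomA n p) := by
  obtain ⟨hsum, hdom⟩ := h
  constructor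
  · rw [dcomA_sum n hn q, dcomA_sum n hn p, hsum]
  · intro k
    rw [dcomA_psum n hn q k, dcomA_psum n hn p k]
    exact sum_min_mono p q (k * n) hsum hdom

end PaperStmt
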